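/- arXiv:1203.0123 — 6 statements merged into one kernel-verified Lean document; each statement's English description precedes it below -/
import Mathlib

section
/- Let E be a finite-dimensional real normed space and V a finite-dimensional subspace of the space of continuous vector fields E → E. Suppose there exist a basis Y₁,…,Y_r of V and a dense subset U ⊆ E such that for every p ∈ U the vectors Y₁(p),…,Y_r(p) are linearly independent in E. Let W₁,…,W_s ∈ V be linearly independent over ℝ, let b₁,…,b_s : E → ℝ be continuous functions, and suppose that the vector field X defined by X(x) = Σ_{j=1}^s b_j(x) • W_j(x) belongs to V. Then each b_j is a constant function. (Paper's Lemma: in a space of vector fields with a modular basis, module coefficients of elements of the space are necessarily constants.) -/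
/-- In a finite-dimensional space of continuous vector fields admitting a basis that is
modular on a dense set, the module coefficients of linear combinations that belong to the
space are necessarily constant. -/
theorem modular_coefficients_are_constant
    {E : Type*} [NormedAddCommGroup E] [NormedSpace ℝ E] [FiniteDimensional ℝ E]
    (V : Submodule ℝ (E → E)) (hVcont : ∀ f ∈ V, Continuous f)
    (hmod : ∃ (r : ℕ) (Y : Module.Basis (Fin r) ℝ V) (U : Set E), Dense U ∧
      ∀ p ∈ U, LinearIndependent ℝ fun i => (Y i : E → E) p)
    (s : ℕ) (W : Fin s → E → E) (hWV : ∀ j, W j ∈ V)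
    (hWind : LinearIndependent ℝ W)
    (b : Fin s → E → ℝ) (hb : ∀ j, Continuous (b j))
    (hXV : (fun x => ∑ j, b j x • W j x) ∈ V) :
    ∀ j, ∃ c : ℝ, ∀ x : E, b j x = c := by
  classical
  obtain ⟨r, Y, U, hUdense, hUmod⟩ := hmod
  set X : V := ⟨fun x => ∑ j, b j x • W j x, hXV⟩ with hXdef
  set W' : Fin s → V := fun j => ⟨W j, hWV j⟩ with hW'def
  have hW'ind : LinearIndependent ℝ W' := by
    apply LinearIndependent.of_comp V.subtype
    exact hWind
  let ev : E → (V →ₗ[ℝ] E) := fun p => (LinearMap.proj p).comp V.subtype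
  have hev : ∀ p (v : V), ev p v = (v : E → E) p := fun _ _ => rfl
  have hexp : ∀ (p : E) (Z : V), (Z : E → E) p = ∑ i, Y.repr Z i • (Y i : E → E) p := by
    intro p Z
    conv_lhs => rw [← Y.sum_repr Z]
    rw [← hev p, map_sum]
    simp [hev]
  have hfreeze : ∀ p ∈ U, (∑ j, b j p • W' j) = X := by
    intro p hp
    have h1 : ((∑ j, b j p • W' j : V) : E → E) p = (X : E → E) p := by
      rw [← hev p, ← hev p, map_sum]
      simp only [map_smul, hev]
      rfl
    rw [hexp p, hexp p X] at h1
    have h2 := Fintype.linearIndependent_iff.mp (hUmod p hp)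
    have h3 : ∀ i, Y.repr (∑ j, b j p • W' j) i = Y.repr X i := by
      intro i
      have h4 := h2 (fun i => Y.repr (∑ j, b j p • W' j) i - Y.repr X i) ?_ i
      · linarith
      · simp only [sub_smul, Finset.sum_sub_distrib, h1, sub_self]
    apply Y.repr.injective
    ext i
    exact h3 i
  obtain ⟨p₀, hp₀⟩ := hUdense.nonempty
  intro j
  refine ⟨b j p₀, ?_⟩
  have hconst : ∀ p ∈ U, b j p = b j p₀ := by
    intro p hp
    have h := (hfreeze p hp).trans (hfreeze p₀ hp₀).symm
    have h5 := Fintype.linearIndependent_iff.mp hW'ind (fun k => b k p - b k p₀) ?_ j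
    · linarith
    · simp only [sub_smul, Finset.sum_sub_distrib, h, sub_self]
  have heq := Continuous.ext_on hUdense (hb j) continuous_const
    (fun p hp => hconst p hp)
  intro x
  exact congrFun heq x
end

section
/- Let I ⊆ ℝ be an open interval, b₀, b₁ : ℝ → ℝ, and let x₁, x₂ : ℝ → ℝ be twice differentiable on I with x_a''(t) = −b₀(t)·x_a(t) − b₁(t)·x_a'(t) on I for a = 1,2. Let k₁, k₂ ∈ ℝ be such that k₁·x₁(t) + k₂·x₂(t) ≠ 0 for all t ∈ I. Then the function y(t) := (k₁·x₁'(t) + k₂·x₂'(t)) / (k₁·x₁(t) + k₂·x₂(t)) is differentiable on I and satisfies the Riccati equation y'(t) = −b₀(t) − b₁(t)·y(t) − y(t)² on I. (The paper's mixed superposition rule (iniMix) for the Riccati hierarchy, case s = 2.) -/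
/-- The mixed superposition rule for the Riccati equation (case `s = 2` of the Riccati
hierarchy): if `x₁, x₂` solve the linear equation `x'' = -b₀ x - b₁ x'` and
`k₁ x₁ + k₂ x₂` does not vanish, then `y = (k₁ x₁' + k₂ x₂')/(k₁ x₁ + k₂ x₂)` solves the
Riccati equation `y' = -b₀ - b₁ y - y²`. -/
theorem riccati_mixed_superposition_rule
    (I : Set ℝ) (hI : IsOpen I) (hI' : I.OrdConnected)
    (b₀ b₁ : ℝ → ℝ) (x₁ x₁' x₁'' x₂ x₂' x₂'' : ℝ → ℝ)
    (hx₁ : ∀ t ∈ I, HasDerivAt x₁ (x₁' t) t)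
    (hx₁' : ∀ t ∈ I, HasDerivAt x₁' (x₁'' t) t)
    (hx₂ : ∀ t ∈ I, HasDerivAt x₂ (x₂' t) t)
    (hx₂' : ∀ t ∈ I, HasDerivAt x₂' (x₂'' t) t)
    (hode₁ : ∀ t ∈ I, x₁'' t = -b₀ t * x₁ t - b₁ t * x₁' t)
    (hode₂ : ∀ t ∈ I, x₂'' t = -b₀ t * x₂ t - b₁ t * x₂' t)
    (k₁ k₂ : ℝ) (hne : ∀ t ∈ I, k₁ * x₁ t + k₂ * x₂ t ≠ 0) :
    ∀ t ∈ I, HasDerivAt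
      (fun s => (k₁ * x₁' s + k₂ * x₂' s) / (k₁ * x₁ s + k₂ * x₂ s))
      (-b₀ t - b₁ t * ((k₁ * x₁' t + k₂ * x₂' t) / (k₁ * x₁ t + k₂ * x₂ t))
        - ((k₁ * x₁' t + k₂ * x₂' t) / (k₁ * x₁ t + k₂ * x₂ t)) ^ 2) t := by
  intro t ht
  have hN : HasDerivAt (fun s => k₁ * x₁' s + k₂ * x₂' s)
      (k₁ * x₁'' t + k₂ * x₂'' t) t :=
    ((hx₁' t ht).const_mul k₁).add ((hx₂' t ht).const_mul k₂)
  have hD : HasDerivAt (fun s => k₁ * x₁ s + k₂ * x₂ s)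
      (k₁ * x₁' t + k₂ * x₂' t) t :=
    ((hx₁ t ht).const_mul k₁).add ((hx₂ t ht).const_mul k₂)
  have h := hN.div hD (hne t ht)
  refine h.congr_deriv ?_
  have hD0 := hne t ht
  rw [hode₁ t ht, hode₂ t ht]
  field_simp
  ring
end

section
/- Let I ⊆ ℝ be an open interval, b₀, b₁ : ℝ → ℝ continuous on I, and let x₁, x₂ : ℝ → ℝ be twice differentiable on I with x_a'' = −b₀·x_a − b₁·x_a' on I for a = 1,2, and with nonvanishing Wronskian x₁(t)·x₂'(t) − x₁'(t)·x₂(t) ≠ 0 on I. Let y : ℝ → ℝ be differentiable on I and satisfy y'(t) = −b₀(t) − b₁(t)·y(t) − y(t)² on I. Then there exist constants k₁, k₂ ∈ ℝ, not both zero, such that k₁·x₁(t) + k₂·x₂(t) ≠ 0 on I and y(t) = (k₁·x₁'(t) + k₂·x₂'(t)) / (k₁·x₁(t) + k₂·x₂(t)) for all t ∈ I. (Every solution of a Riccati equation is obtained from the mixed superposition rule (iniMix) with s = 2.) -/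
/-- A function with zero derivative on an open convex set is constant there. -/
lemma riccati_aux_const {S : Set ℝ} (hSo : IsOpen S) (hSc : Convex ℝ S) {f : ℝ → ℝ}
    (h : ∀ t ∈ S, HasDerivAt f 0 t) {a b : ℝ} (ha : a ∈ S) (hb : b ∈ S) : f a = f b := by
  refine hSc.is_const_of_fderivWithin_eq_zero
    (fun t ht => ((h t ht).differentiableAt).differentiableWithinAt) (fun t ht => ?_) ha hb
  rw [fderivWithin_eq_fderiv (hSo.uniqueDiffWithinAt ht) (h t ht).differentiableAt]
  rw [(h t ht).hasFDerivAt.fderiv]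
  ext x
  simp

/-- Every solution of a Riccati equation is obtained from the mixed superposition rule:
given two solutions `x₁, x₂` of the linear equation `x'' = -b₀ x - b₁ x'` with
nonvanishing Wronskian, every solution `y` of `y' = -b₀ - b₁ y - y²` on the open interval
`I` has the form `y = (k₁ x₁' + k₂ x₂')/(k₁ x₁ + k₂ x₂)` for suitable constants. -/
theorem riccati_mixed_superposition_rule_general_solution
    (I : Set ℝ) (hI : IsOpen I) (hI' : I.OrdConnected)
    (b₀ b₁ : ℝ → ℝ) (hb₀ : ContinuousOn b₀ I) (hb₁ : ContinuousOn b₁ I)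
    (x₁ x₁' x₁'' x₂ x₂' x₂'' : ℝ → ℝ)
    (hx₁ : ∀ t ∈ I, HasDerivAt x₁ (x₁' t) t)
    (hx₁' : ∀ t ∈ I, HasDerivAt x₁' (x₁'' t) t)
    (hx₂ : ∀ t ∈ I, HasDerivAt x₂ (x₂' t) t)
    (hx₂' : ∀ t ∈ I, HasDerivAt x₂' (x₂'' t) t)
    (hode₁ : ∀ t ∈ I, x₁'' t = -b₀ t * x₁ t - b₁ t * x₁' t)
    (hode₂ : ∀ t ∈ I, x₂'' t = -b₀ t * x₂ t - b₁ t * x₂' t)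
    (hW : ∀ t ∈ I, x₁ t * x₂' t - x₁' t * x₂ t ≠ 0)
    (y : ℝ → ℝ)
    (hy : ∀ t ∈ I, HasDerivAt y (-b₀ t - b₁ t * y t - y t ^ 2) t) :
    ∃ k₁ k₂ : ℝ, ¬(k₁ = 0 ∧ k₂ = 0) ∧
      (∀ t ∈ I, k₁ * x₁ t + k₂ * x₂ t ≠ 0) ∧
      (∀ t ∈ I, y t = (k₁ * x₁' t + k₂ * x₂' t) / (k₁ * x₁ t + k₂ * x₂ t)) := by
  set f₁ : ℝ → ℝ := fun t => x₁' t - y t * x₁ t with hf₁def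
  set f₂ : ℝ → ℝ := fun t => x₂' t - y t * x₂ t with hf₂def
  -- derivatives of f₁, f₂
  have hd₁ : ∀ t ∈ I, HasDerivAt f₁ (-(b₁ t + y t) * f₁ t) t := by
    intro t ht
    have h := (hx₁' t ht).sub ((hy t ht).mul (hx₁ t ht))
    refine h.congr_deriv ?_
    rw [hode₁ t ht]; simp only [hf₁def]; ring
  have hd₂ : ∀ t ∈ I, HasDerivAt f₂ (-(b₁ t + y t) * f₂ t) t := by
    intro t ht
    have h := (hx₂' t ht).sub ((hy t ht).mul (hx₂ t ht))
    refine h.congr_deriv ?_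
    rw [hode₂ t ht]; simp only [hf₂def]; ring
  -- f₁ and f₂ never vanish simultaneously
  have hnever : ∀ t ∈ I, f₁ t = 0 → f₂ t ≠ 0 := by
    intro t ht h1 h2
    apply hW t ht
    have e1 : x₁' t = y t * x₁ t := by
      have := h1; simp only [hf₁def] at this; linarith
    have e2 : x₂' t = y t * x₂ t := by
      have := h2; simp only [hf₂def] at this; linarith
    rw [e1, e2]; ring
  by_cases hZ : ∀ t ∈ I, f₁ t = 0
  · -- f₁ ≡ 0 : take (k₁, k₂) = (1, 0)
    refine ⟨1, 0, by simp, ?_, ?_⟩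
    · intro t ht h0
      apply hW t ht
      have hx0 : x₁ t = 0 := by simpa using h0
      have e1 : x₁' t = y t * x₁ t := by
        have := hZ t ht; simp only [hf₁def] at this; linarith
      rw [hx0] at e1 ⊢; simp [e1]
    · intro t ht
      have hx0 : x₁ t ≠ 0 := by
        intro h0
        apply hW t ht
        have e1 : x₁' t = y t * x₁ t := by
          have := hZ t ht; simp only [hf₁def] at this; linarith
        rw [h0] at e1 ⊢; simp [e1]
      have e1 : x₁' t = y t * x₁ t := by
        have := hZ t ht; simp only [hf₁def] at this; linarith
      rw [e1, one_mul, one_mul, zero_mul, add_zero, zero_mul, add_zero, mul_div_assoc, div_self hx0, mul_one]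
  · -- f₁ is nonvanishing on I (by connectedness), then f₂/f₁ is constant
    push_neg at hZ
    obtain ⟨t₁, ht₁, hft₁⟩ := hZ
    have hc₁ : ∀ t ∈ I, ContinuousAt f₁ t := fun t ht => (hd₁ t ht).continuousAt
    have hc₂ : ∀ t ∈ I, ContinuousAt f₂ t := fun t ht => (hd₂ t ht).continuousAt
    -- zero set and nonzero set of f₁ within I are both open
    have hU : IsOpen {t | t ∈ I ∧ f₁ t ≠ 0} := by
      rw [isOpen_iff_mem_nhds]
      rintro t ⟨ht, hft⟩
      have h1 : ∀ᶠ s in nhds t, f₁ s ≠ 0 := (hc₁ t ht).eventually_ne hft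
      have h2 : ∀ᶠ s in nhds t, s ∈ I := hI.mem_nhds ht
      filter_upwards [h1, h2] with s hs1 hs2
      exact ⟨hs2, hs1⟩
    have hV : IsOpen {t | t ∈ I ∧ f₁ t = 0} := by
      rw [isOpen_iff_mem_nhds]
      rintro t ⟨ht, hft⟩
      have hf2 : f₂ t ≠ 0 := hnever t ht hft
      have h1 : ∀ᶠ s in nhds t, f₂ s ≠ 0 := (hc₂ t ht).eventually_ne hf2
      have h2 : ∀ᶠ s in nhds t, s ∈ I := hI.mem_nhds ht
      obtain ⟨ε, hε, hball⟩ := Metric.eventually_nhds_iff_ball.1 (h1.and h2)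
      have hsub : ∀ s ∈ Metric.ball t ε, f₁ s = 0 := by
        intro s hs
        have hzero : ∀ u ∈ Metric.ball t ε, HasDerivAt (fun u => f₁ u / f₂ u) 0 u := by
          intro u hu
          obtain ⟨hu2, huI⟩ := hball u hu
          have h := (hd₁ u huI).div (hd₂ u huI) hu2
          refine h.congr_deriv ?_
          rw [div_eq_zero_iff]; left; ring
        have hconst : f₁ s / f₂ s = f₁ t / f₂ t :=
          riccati_aux_const Metric.isOpen_ball (convex_ball t ε) hzero hs
            (Metric.mem_ball_self hε)
        rw [hft] at hconst
        simp only [zero_div, div_eq_zero_iff] at hconst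
        rcases hconst with h | h
        · exact h
        · exact absurd h (hball s hs).1
      filter_upwards [Metric.ball_mem_nhds t hε, h2] with s hs1 hs2
      exact ⟨hs2, hsub s hs1⟩
    -- by preconnectedness, f₁ never vanishes on I
    have hpre : IsPreconnected I := hI'.convex.isPreconnected
    have hnz : ∀ t ∈ I, f₁ t ≠ 0 := by
      intro t ht
      by_contra h0
      have hne1 : (I ∩ {t | t ∈ I ∧ f₁ t ≠ 0}).Nonempty := ⟨t₁, ht₁, ht₁, hft₁⟩
      have hne2 : (I ∩ {t | t ∈ I ∧ f₁ t = 0}).Nonempty := ⟨t, ht, ht, h0⟩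
      have hcov : I ⊆ {t | t ∈ I ∧ f₁ t ≠ 0} ∪ {t | t ∈ I ∧ f₁ t = 0} := by
        intro s hs
        by_cases h : f₁ s = 0
        · exact Or.inr ⟨hs, h⟩
        · exact Or.inl ⟨hs, h⟩
      obtain ⟨s, _, ⟨_, hs1⟩, ⟨_, hs2⟩⟩ := hpre _ _ hU hV hcov hne1 hne2
      exact hs1 hs2
    -- f₂/f₁ has zero derivative on I, hence is a constant c
    have hzero : ∀ u ∈ I, HasDerivAt (fun u => f₂ u / f₁ u) 0 u := by
      intro u hu
      have h := (hd₂ u hu).div (hd₁ u hu) (hnz u hu)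
      refine h.congr_deriv ?_
      rw [div_eq_zero_iff]; left; ring
    set c : ℝ := f₂ t₁ / f₁ t₁ with hc
    have hrat : ∀ t ∈ I, f₂ t = c * f₁ t := by
      intro t ht
      have h := riccati_aux_const hI hI'.convex hzero ht ht₁
      rw [← hc] at h
      have h2 := (div_eq_iff (hnz t ht)).1 h
      linarith [h2]
    refine ⟨-c, 1, by simp, ?_, ?_⟩
    · intro t ht h0
      apply hW t ht
      have hx2 : x₂ t = c * x₁ t := by linarith [h0]
      have hr := hrat t ht
      simp only [hf₁def, hf₂def] at hr
      have e2 : x₂' t = c * x₁' t := by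
        rw [hx2] at hr; nlinarith [hr]
      rw [hx2, e2]; ring
    · intro t ht
      have hden : -c * x₁ t + 1 * x₂ t ≠ 0 := by
        intro h0
        apply hW t ht
        have hx2 : x₂ t = c * x₁ t := by linarith [h0]
        have hr := hrat t ht
        simp only [hf₁def, hf₂def] at hr
        have e2 : x₂' t = c * x₁' t := by
          rw [hx2] at hr; nlinarith [hr]
        rw [hx2, e2]; ring
      have hr := hrat t ht
      simp only [hf₁def, hf₂def] at hr
      rw [eq_div_iff hden]
      nlinarith [hr]
end

section
/- Let I ⊆ ℝ be an open interval, n ∈ ℝ with n ≠ 1, a, b : ℝ → ℝ, and let x₁, x₂ : ℝ → ℝ be differentiable on I with x₁(t) > 0, x₂(t) > 0, x₁'(t) = a(t)·x₁(t) + b(t)·x₁(t)^n, and x₂'(t) = a(t)·x₂(t) for all t ∈ I. Let k ∈ ℝ be such that x₁(t)^{1−n} + k·x₂(t)^{1−n} > 0 for all t ∈ I. Then the function x(t) := (x₁(t)^{1−n} + k·x₂(t)^{1−n})^{1/(1−n)} is differentiable, positive on I, and satisfies the Bernoulli equation x'(t) = a(t)·x(t) + b(t)·x(t)^n on I. (The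 paper's mixed superposition rule (Mix2) for Bernoulli equations.) -/
/-- The mixed superposition rule for Bernoulli equations: if `x₁` solves the Bernoulli
equation `x' = a x + b xⁿ` and `x₂` solves the homogeneous equation `x' = a x`, and
`x₁^(1-n) + k x₂^(1-n) > 0`, then `x = (x₁^(1-n) + k x₂^(1-n))^(1/(1-n))` is a positive
solution of the Bernoulli equation. -/
theorem bernoulli_mixed_superposition_rule
    (I : Set ℝ) (hI : IsOpen I) (hI' : I.OrdConnected)
    (n : ℝ) (hn : n ≠ 1) (a b : ℝ → ℝ) (x₁ x₂ : ℝ → ℝ)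
    (hpos₁ : ∀ t ∈ I, 0 < x₁ t) (hpos₂ : ∀ t ∈ I, 0 < x₂ t)
    (hx₁ : ∀ t ∈ I, HasDerivAt x₁ (a t * x₁ t + b t * x₁ t ^ n) t)
    (hx₂ : ∀ t ∈ I, HasDerivAt x₂ (a t * x₂ t) t)
    (k : ℝ) (hk : ∀ t ∈ I, 0 < x₁ t ^ (1 - n) + k * x₂ t ^ (1 - n)) :
    ∀ t ∈ I,
      0 < (x₁ t ^ (1 - n) + k * x₂ t ^ (1 - n)) ^ (1 / (1 - n)) ∧
      HasDerivAt (fun s => (x₁ s ^ (1 - n) + k * x₂ s ^ (1 - n)) ^ (1 / (1 - n)))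
        (a t * ((x₁ t ^ (1 - n) + k * x₂ t ^ (1 - n)) ^ (1 / (1 - n)))
          + b t * ((x₁ t ^ (1 - n) + k * x₂ t ^ (1 - n)) ^ (1 / (1 - n))) ^ n) t := by
  intro t ht
  have h1n : (1 : ℝ) - n ≠ 0 := sub_ne_zero.mpr (Ne.symm hn)
  have hA := hpos₁ t ht
  have hB := hpos₂ t ht
  have hG := hk t ht
  refine ⟨Real.rpow_pos_of_pos hG _, ?_⟩
  have hd1 : HasDerivAt (fun s => x₁ s ^ (1 - n))
      ((a t * x₁ t + b t * x₁ t ^ n) * (1 - n) * x₁ t ^ (1 - n - 1)) t :=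
    (hx₁ t ht).rpow_const (Or.inl hA.ne')
  have hd2 : HasDerivAt (fun s => k * x₂ s ^ (1 - n))
      (k * ((a t * x₂ t) * (1 - n) * x₂ t ^ (1 - n - 1))) t :=
    ((hx₂ t ht).rpow_const (Or.inl hB.ne')).const_mul k
  have hdg := (hd1.add hd2).rpow_const (p := 1 / (1 - n)) (Or.inl hG.ne')
  convert hdg using 1
  · rfl
  set A := x₁ t with hAdef
  set B := x₂ t with hBdef
  set G := A ^ (1 - n) + k * B ^ (1 - n) with hGdef
  -- algebraic identities
  have e1 : A ^ (1 - n - 1) * A = A ^ (1 - n) := by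
    have h := Real.rpow_add hA (1 - n - 1) 1
    rw [Real.rpow_one] at h
    rw [← h]; congr 1; ring
  have e2 : A ^ (1 - n - 1) * A ^ n = 1 := by
    rw [← Real.rpow_add hA]
    norm_num
  have e3 : B ^ (1 - n - 1) * B = B ^ (1 - n) := by
    have h := Real.rpow_add hB (1 - n - 1) 1
    rw [Real.rpow_one] at h
    rw [← h]; congr 1; ring
  have e4 : G ^ (1 / (1 - n) - 1) * G = G ^ (1 / (1 - n)) := by
    have h := Real.rpow_add hG (1 / (1 - n) - 1) 1
    rw [Real.rpow_one] at h
    rw [← h]; congr 1; ring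
  have e5 : (G ^ (1 / (1 - n))) ^ n = G ^ (1 / (1 - n) - 1) := by
    rw [← Real.rpow_mul hG.le]
    congr 1
    field_simp
    ring
  rw [e5]
  have expand : (a t * A + b t * A ^ n) * (1 - n) * A ^ (1 - n - 1)
        + k * (a t * B * (1 - n) * B ^ (1 - n - 1))
      = (1 - n) * (a t * G + b t) := by
    have : (a t * A + b t * A ^ n) * (1 - n) * A ^ (1 - n - 1)
        = (1 - n) * (a t * (A ^ (1 - n - 1) * A) + b t * (A ^ (1 - n - 1) * A ^ n)) := by
      ring
    rw [this, e1, e2]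
    have : k * (a t * B * (1 - n) * B ^ (1 - n - 1))
        = (1 - n) * (k * a t * (B ^ (1 - n - 1) * B)) := by ring
    rw [this, e3, hGdef]
    ring
  rw [expand]
  have : (1 - n) * (a t * G + b t) * (1 / (1 - n)) * G ^ (1 / (1 - n) - 1)
      = a t * (G ^ (1 / (1 - n) - 1) * G) + b t * G ^ (1 / (1 - n) - 1) := by
    field_simp
  rw [show ((fun s => x₁ s ^ (1 - n)) + fun s => k * x₂ s ^ (1 - n)) t = G from rfl, this, e4]
end

section
/- Let I ⊆ ℝ be an open interval, ω : ℝ → ℝ, c ∈ ℝ, and let x₁, x₂ : ℝ → ℝ be twice differentiable on I with x_a''(t) = −ω(t)²·x_a(t) on I for a = 1,2. Suppose the Wronskian is a nonzero constant: there is W₀ ≠ 0 with x₁(t)·x₂'(t) − x₁'(t)·x₂(t) = W₀ for all t ∈ I. Let k₁, k₂ ∈ ℝ satisfy 4k₁k₂ − c·W₀² ≥ 0, set Q(t) := k₁·x₁(t)² + k₂·x₂(t)² + √(4k₁k₂ − c·W₀²)·x₁(t)·x₂(t), and assume Q(t) > 0 for all t ∈ I. Then the function x(t) := (√2 / |W₀|)·√(Q(t))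 is positive, twice differentiable on I, and satisfies the Milne–Pinney equation x''(t) = −ω(t)²·x(t) + c / x(t)³ for all t ∈ I. (The paper's superposition formula (Erm) for Milne–Pinney equations / Winternitz–Smorodinsky oscillators in terms of solutions of the t-dependent harmonic oscillator.) -/
lemma final_alg (u s N N' P Q ω c W₀ : ℝ) (hs : 0 < s) (hu : 0 < u)
    (huW : u ^ 2 * W₀ ^ 2 = 2) (hsQ : s ^ 2 = Q)
    (hN' : N' = 2 * P - 2 * ω ^ 2 * Q)
    (hkey : 4 * Q * P - N ^ 2 = c * W₀ ^ 4) :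
    -ω ^ 2 * (u * s) + c / (u * s) ^ 3
      = u * ((N' * (2 * s) - N * (2 * (N / (2 * s)))) / (2 * s) ^ 2) := by
  field_simp
  linear_combination (-2*u^4*s^2) * hN' + (-u^4) * hkey
    + (-4*ω^2*u^4*s^2 - 4*u^4*P) * hsQ + (-c*(u^2*W₀^2+2)) * huW

/-- The superposition formula for Milne–Pinney equations: if `x₁, x₂` solve the
`t`-dependent harmonic oscillator `x'' = -ω(t)² x` with constant nonzero Wronskian `W₀`,
`4k₁k₂ - c W₀² ≥ 0` and `Q = k₁ x₁² + k₂ x₂² + √(4k₁k₂ - c W₀²) x₁ x₂ > 0`, then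
`x = (√2/|W₀|) √Q` is a positive solution of the Milne–Pinney equation
`x'' = -ω(t)² x + c/x³`. -/
theorem milne_pinney_superposition_rule
    (I : Set ℝ) (hI : IsOpen I) (hI' : I.OrdConnected)
    (ω : ℝ → ℝ) (c : ℝ) (x₁ x₁' x₂ x₂' : ℝ → ℝ)
    (hx₁ : ∀ t ∈ I, HasDerivAt x₁ (x₁' t) t)
    (hx₁' : ∀ t ∈ I, HasDerivAt x₁' (-ω t ^ 2 * x₁ t) t)
    (hx₂ : ∀ t ∈ I, HasDerivAt x₂ (x₂' t) t)
    (hx₂' : ∀ t ∈ I, HasDerivAt x₂' (-ω t ^ 2 * x₂ t) t)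
    (W₀ : ℝ) (hW₀ : W₀ ≠ 0)
    (hW : ∀ t ∈ I, x₁ t * x₂' t - x₁' t * x₂ t = W₀)
    (k₁ k₂ : ℝ) (hkc : 0 ≤ 4 * k₁ * k₂ - c * W₀ ^ 2)
    (hQ : ∀ t ∈ I, 0 < k₁ * x₁ t ^ 2 + k₂ * x₂ t ^ 2
      + Real.sqrt (4 * k₁ * k₂ - c * W₀ ^ 2) * x₁ t * x₂ t) :
    (∀ t ∈ I, 0 < (Real.sqrt 2 / |W₀|) *
      Real.sqrt (k₁ * x₁ t ^ 2 + k₂ * x₂ t ^ 2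
        + Real.sqrt (4 * k₁ * k₂ - c * W₀ ^ 2) * x₁ t * x₂ t)) ∧
    ∃ x' : ℝ → ℝ,
      (∀ t ∈ I, HasDerivAt (fun s => (Real.sqrt 2 / |W₀|) *
        Real.sqrt (k₁ * x₁ s ^ 2 + k₂ * x₂ s ^ 2
          + Real.sqrt (4 * k₁ * k₂ - c * W₀ ^ 2) * x₁ s * x₂ s)) (x' t) t) ∧
      (∀ t ∈ I, HasDerivAt x'
        (-ω t ^ 2 * ((Real.sqrt 2 / |W₀|) *
            Real.sqrt (k₁ * x₁ t ^ 2 + k₂ * x₂ t ^ 2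
              + Real.sqrt (4 * k₁ * k₂ - c * W₀ ^ 2) * x₁ t * x₂ t))
          + c / ((Real.sqrt 2 / |W₀|) *
            Real.sqrt (k₁ * x₁ t ^ 2 + k₂ * x₂ t ^ 2
              + Real.sqrt (4 * k₁ * k₂ - c * W₀ ^ 2) * x₁ t * x₂ t)) ^ 3) t) := by
  set α := Real.sqrt (4 * k₁ * k₂ - c * W₀ ^ 2) with hαdef
  have hα : α ^ 2 = 4 * k₁ * k₂ - c * W₀ ^ 2 := Real.sq_sqrt hkc
  have h2 : (0:ℝ) < Real.sqrt 2 := Real.sqrt_pos.mpr (by norm_num)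
  have hWabs : (0:ℝ) < |W₀| := abs_pos.mpr hW₀
  have hu : (0:ℝ) < Real.sqrt 2 / |W₀| := div_pos h2 hWabs
  have huW : (Real.sqrt 2 / |W₀|) ^ 2 * W₀ ^ 2 = 2 := by
    rw [div_pow, Real.sq_sqrt (by norm_num : (0:ℝ) ≤ 2), sq_abs]
    field_simp
  -- Q and its derivative
  have hQd : ∀ t ∈ I, HasDerivAt
      (fun s => k₁ * x₁ s ^ 2 + k₂ * x₂ s ^ 2 + α * x₁ s * x₂ s)
      (2 * k₁ * x₁ t * x₁' t + 2 * k₂ * x₂ t * x₂' t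
        + α * (x₁' t * x₂ t + x₁ t * x₂' t)) t := by
    intro t ht
    have h1 := hx₁ t ht
    have h2' := hx₂ t ht
    have := (((h1.pow 2).const_mul k₁).add ((h2'.pow 2).const_mul k₂)).add
      (((h1.const_mul α).mul h2'))
    refine this.congr_deriv ?_
    ring
  have hQpos := hQ
  have hsqrtQpos : ∀ t ∈ I, 0 < Real.sqrt
      (k₁ * x₁ t ^ 2 + k₂ * x₂ t ^ 2 + α * x₁ t * x₂ t) :=
    fun t ht => Real.sqrt_pos.mpr (hQpos t ht)
  refine ⟨fun t ht => mul_pos hu (hsqrtQpos t ht), ?_⟩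
  refine ⟨fun t => (Real.sqrt 2 / |W₀|) *
      ((2 * k₁ * x₁ t * x₁' t + 2 * k₂ * x₂ t * x₂' t
        + α * (x₁' t * x₂ t + x₁ t * x₂' t)) /
       (2 * Real.sqrt (k₁ * x₁ t ^ 2 + k₂ * x₂ t ^ 2 + α * x₁ t * x₂ t))), ?_, ?_⟩
  · intro t ht
    exact (((hQd t ht).sqrt (hQpos t ht).ne')).const_mul (Real.sqrt 2 / |W₀|)
  · intro t ht
    -- derivative of the numerator
    have h1 := hx₁ t ht
    have h1' := hx₁' t ht
    have h2' := hx₂ t ht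
    have h2'' := hx₂' t ht
    have hN : HasDerivAt (fun s => 2 * k₁ * x₁ s * x₁' s + 2 * k₂ * x₂ s * x₂' s
        + α * (x₁' s * x₂ s + x₁ s * x₂' s))
        (2 * (k₁ * x₁' t ^ 2 + k₂ * x₂' t ^ 2 + α * x₁' t * x₂' t)
          - 2 * ω t ^ 2 * (k₁ * x₁ t ^ 2 + k₂ * x₂ t ^ 2 + α * x₁ t * x₂ t)) t := by
      have := ((((h1.const_mul (2*k₁)).mul h1').add
        ((h2'.const_mul (2*k₂)).mul h2'')).add
        (((h1'.mul h2').add (h1.mul h2'')).const_mul α))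
      refine this.congr_deriv ?_
      ring
    have hden : HasDerivAt (fun s => 2 * Real.sqrt
        (k₁ * x₁ s ^ 2 + k₂ * x₂ s ^ 2 + α * x₁ s * x₂ s))
        (2 * ((2 * k₁ * x₁ t * x₁' t + 2 * k₂ * x₂ t * x₂' t
          + α * (x₁' t * x₂ t + x₁ t * x₂' t)) /
          (2 * Real.sqrt (k₁ * x₁ t ^ 2 + k₂ * x₂ t ^ 2 + α * x₁ t * x₂ t)))) t := by
      exact ((hQd t ht).sqrt (hQpos t ht).ne').const_mul (2:ℝ)
    have hdne : 2 * Real.sqrt (k₁ * x₁ t ^ 2 + k₂ * x₂ t ^ 2 + α * x₁ t * x₂ t) ≠ 0 :=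
      mul_ne_zero two_ne_zero (hsqrtQpos t ht).ne'
    have hD := ((hN.div hden hdne).const_mul (Real.sqrt 2 / |W₀|))
    refine hD.congr_deriv (Eq.symm ?_)
    set s := Real.sqrt (k₁ * x₁ t ^ 2 + k₂ * x₂ t ^ 2 + α * x₁ t * x₂ t) with hs
    have hspos : 0 < s := hsqrtQpos t ht
    have hsQ : s ^ 2 = k₁ * x₁ t ^ 2 + k₂ * x₂ t ^ 2 + α * x₁ t * x₂ t :=
      Real.sq_sqrt (hQpos t ht).le
    have hkey : 4 * (k₁ * x₁ t ^ 2 + k₂ * x₂ t ^ 2 + α * x₁ t * x₂ t)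
        * (k₁ * x₁' t ^ 2 + k₂ * x₂' t ^ 2 + α * x₁' t * x₂' t)
        - (2 * k₁ * x₁ t * x₁' t + 2 * k₂ * x₂ t * x₂' t
          + α * (x₁' t * x₂ t + x₁ t * x₂' t)) ^ 2 = c * W₀ ^ 4 := by
      have hWt := hW t ht
      have : 4 * (k₁ * x₁ t ^ 2 + k₂ * x₂ t ^ 2 + α * x₁ t * x₂ t)
          * (k₁ * x₁' t ^ 2 + k₂ * x₂' t ^ 2 + α * x₁' t * x₂' t)
          - (2 * k₁ * x₁ t * x₁' t + 2 * k₂ * x₂ t * x₂' t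
            + α * (x₁' t * x₂ t + x₁ t * x₂' t)) ^ 2
          = (4 * k₁ * k₂ - α ^ 2) * (x₁ t * x₂' t - x₁' t * x₂ t) ^ 2 := by ring
      rw [this, hα, hWt]; ring
    exact final_alg (Real.sqrt 2 / |W₀|) s _ _
      (k₁ * x₁' t ^ 2 + k₂ * x₂' t ^ 2 + α * x₁' t * x₂' t)
      (k₁ * x₁ t ^ 2 + k₂ * x₂ t ^ 2 + α * x₁ t * x₂ t)
      (ω t) c W₀ hspos hu huW hsQ rfl hkey
end

section
/- Let s ≥ 2 and consider the Lie algebra gl(s,ℝ) of s×s real matrices with the commutator bracket [A,B] = AB − BA. Let E_{i,j} (0 ≤ i,j ≤ s−1) denote the standard matrix units and let Δ := Σ_{i=0}^{s−2} E_{i,i+1} + E_{s−1,0}. Then the Lie subalgebra of gl(s,ℝ) generated by the set {E_{s−1,j} : j = 0,…,s−1} ∪ {Δ} is all of gl(s,ℝ). (This is the paper's claim that the minimal Lie algebra V^{X^b_{(1)}} of the first-order linear system associated with the s-th order linear homogeneous ODE x^{(s)} = −Σ_{l} b_l(t) x^{(l)}, with coefficients b whose coefficient vectors span ℝ^s, is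 spanned by all the vector fields X_{i,j} = u^j ∂/∂u^i, hence is isomorphic to gl(s,ℝ).) -/
attribute [local instance] LieRing.ofAssociativeRing

open Matrix
open scoped Fin.NatCast Fin.CommRing

section aux

variable {s : ℕ} [NeZero s]

private lemma delta_bracket (k j : Fin s) :
    ⁅∑ i : Fin s, single i (i + 1) (1 : ℝ), single k j (1 : ℝ)⁆ =
      single (k - 1) j 1 - single k (j + 1) 1 := by
  rw [Ring.lie_def, Finset.sum_mul, Finset.mul_sum]
  have h1 : ∑ i : Fin s, single i (i + 1) (1 : ℝ) * single k j 1 =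
      single (k - 1) j 1 := by
    rw [Finset.sum_eq_single (k - 1)]
    · rw [sub_add_cancel, single_mul_single_same, one_mul]
    · intro i _ hi
      apply single_mul_single_of_ne
      intro h
      exact hi (eq_sub_of_add_eq h)
    · exact fun h => absurd (Finset.mem_univ _) h
  have h2 : ∑ i : Fin s, single k j (1 : ℝ) * single i (i + 1) 1 =
      single k (j + 1) 1 := by
    rw [Finset.sum_eq_single j]
    · rw [single_mul_single_same, one_mul]
    · intro i _ hi
      apply single_mul_single_of_ne
      intro h
      exact hi h.symm
    · exact fun h => absurd (Finset.mem_univ _) h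
  rw [h1, h2]

private lemma step (K : LieSubalgebra ℝ (Matrix (Fin s) (Fin s) ℝ))
    (hΔ : (∑ i : Fin s, single i (i + 1) (1 : ℝ)) ∈ K) (k : Fin s)
    (h : ∀ j, single k j (1 : ℝ) ∈ K) :
    ∀ j, single (k - 1) j (1 : ℝ) ∈ K := by
  intro j
  have hmem := K.add_mem (K.lie_mem hΔ (h j)) (h (j + 1))
  rwa [delta_bracket, sub_add_cancel] at hmem

end aux

/-- The Lie subalgebra of `gl(s,ℝ)` (with the commutator bracket) generated by the matrix
units `E_{s-1,j}`, `j = 0,…,s-1`, together with `Δ = Σ_{i=0}^{s-2} E_{i,i+1} + E_{s-1,0}`,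
is all of `gl(s,ℝ)`.  (Here `i + 1` is addition in `Fin s`, which wraps around, so the sum
`Σ_{i : Fin s} E_{i,i+1}` is exactly `Σ_{i=0}^{s-2} E_{i,i+1} + E_{s-1,0}`.) -/
theorem lieSpan_last_row_and_shift_eq_top (s : ℕ) (hs : 2 ≤ s) :
    LieSubalgebra.lieSpan ℝ (Matrix (Fin s) (Fin s) ℝ)
      ({∑ i : Fin s, Matrix.single i (i + ⟨1, by omega⟩) 1} ∪
        Set.range (fun j : Fin s =>
          Matrix.single (⟨s - 1, by omega⟩ : Fin s) j 1)) = ⊤ := by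
  have : NeZero s := ⟨by omega⟩
  have hone : (⟨1, by omega⟩ : Fin s) = 1 := by
    ext; simp [Fin.val_one, Nat.mod_eq_of_lt (by omega : 1 < s)]
  rw [hone]
  set L : Fin s := (⟨s - 1, by omega⟩ : Fin s) with hL
  set S : Set (Matrix (Fin s) (Fin s) ℝ) :=
      ({∑ i : Fin s, Matrix.single i (i + 1) 1} ∪
        Set.range (fun j : Fin s => Matrix.single L j 1)) with hS
  set K := LieSubalgebra.lieSpan ℝ (Matrix (Fin s) (Fin s) ℝ) S with hK
  have hsub : S ⊆ K := LieSubalgebra.subset_lieSpan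
  have hΔ : (∑ i : Fin s, Matrix.single i (i + 1) (1 : ℝ)) ∈ K :=
    hsub (Or.inl rfl)
  have hlast : ∀ j : Fin s, Matrix.single L j (1 : ℝ) ∈ K :=
    fun j => hsub (Or.inr ⟨j, rfl⟩)
  have hrow : ∀ n : ℕ, ∀ j : Fin s,
      Matrix.single (L - (n : Fin s)) j (1 : ℝ) ∈ K := by
    intro n
    induction n with
    | zero => simpa using hlast
    | succ n ih =>
      have heq : L - ((n + 1 : ℕ) : Fin s) = (L - (n : Fin s)) - 1 := by
        push_cast; ring
      rw [heq]
      exact step K hΔ _ ih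
  have hall : ∀ i j : Fin s, Matrix.single i j (1 : ℝ) ∈ K := by
    intro i j
    have := hrow ((L - i : Fin s)).val j
    rwa [Fin.cast_val_eq_self, sub_sub_cancel] at this
  rw [eq_top_iff]
  intro M _
  rw [matrix_eq_sum_single M]
  refine sum_mem fun i _ => sum_mem fun j _ => ?_
  have he : Matrix.single i j (M i j) = M i j • Matrix.single i j (1 : ℝ) := by
    rw [smul_single, smul_eq_mul, mul_one]
  rw [he]
  exact K.smul_mem _ (hall i j)
end
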